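/- Let e : ℕ → ℕ satisfy e(n)/n → ∞. Then for all sufficiently large n there exists a simple graph G_n on n vertices with no isolated vertices, at most e(n) edges, and rank_{𝔽₂}(Ā(G_n))/n → 0 as n → ∞; i.e., |E| = ω(n) edges suffice for binary storage codes of rate 1 − o(1). -/

import Mathlib

open Classical in
/-- The augmented adjacency matrix of a simple graph on `Fin n` over `𝔽₂ = ZMod 2`. -/
noncomputable def augAdj {n : ℕ} (G : SimpleGraph (Fin n)) :
    Matrix (Fin n) (Fin n) (ZMod 2) :=
  fun u v => if u = v ∨ G.Adj u v then 1 else 0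

namespace StorageAux

/-- Block index: vertices are grouped into blocks of size `k`, with the leftover
vertices merged into the last block (block indices run over `0, …, q-1`). -/
def blk (k q j : ℕ) : ℕ := min (j / k) (q - 1)

/-- Disjoint union of cliques: blocks of size `k` (last block possibly larger). -/
def blockGraph (n k : ℕ) : SimpleGraph (Fin n) where
  Adj u v := u ≠ v ∧ blk k (n / k) u.val = blk k (n / k) v.val
  symm := ⟨fun u v h => ⟨h.1.symm, h.2.symm⟩⟩
  loopless := ⟨fun v h => h.1 rfl⟩

lemma blk_lt {k q : ℕ} (hq : 1 ≤ q) (j : ℕ) : blk k q j < q :=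
  lt_of_le_of_lt (min_le_right _ _) (by omega)

lemma blk_mem {n k : ℕ} (hk : 2 ≤ k) (hkn : k ≤ n) {j : ℕ} (hj : j < n) :
    blk k (n / k) j * k ≤ j ∧ j + 1 < blk k (n / k) j * k + 2 * k := by
  have hk0 : 0 < k := by omega
  have hq : 1 ≤ n / k := (Nat.one_le_div_iff hk0).2 hkn
  set q := n / k with hqdef
  set B := blk k q j with hB
  have hlow : B * k ≤ j := by
    calc B * k ≤ j / k * k := Nat.mul_le_mul_right _ (min_le_left _ _)
      _ ≤ j := Nat.div_mul_le_self _ _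
  refine ⟨hlow, ?_⟩
  rcases le_or_gt (j / k) (q - 1) with h | h
  · have hBe : B = j / k := by rw [hB, blk, min_eq_left h]
    have h1 := Nat.div_add_mod j k
    have h2 := Nat.mod_lt j hk0
    have hcomm : j / k * k = k * (j / k) := Nat.mul_comm _ _
    rw [hBe]
    omega
  · have hBe : B = q - 1 := by rw [hB, blk, min_eq_right (le_of_lt h)]
    have hmul : (q - 1) * k + k = q * k := by
      have hx : q - 1 + 1 = q := by omega
      calc (q - 1) * k + k = (q - 1 + 1) * k := by ring
        _ = q * k := by rw [hx]
    have h1 := Nat.div_add_mod n k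
    have h2 := Nat.mod_lt n hk0
    have hcomm : n / k * k = k * (n / k) := Nat.mul_comm _ _
    simp only [← hqdef] at h1 hcomm
    rw [hBe]
    omega

open Classical in
lemma degree_le {n k : ℕ} (hk : 2 ≤ k) (hkn : k ≤ n) (v : Fin n) :
    (blockGraph n k).degree v + 2 ≤ 2 * k := by
  classical
  set B := blk k (n / k) v.val with hB
  have hsub : ((blockGraph n k).neighborFinset v).image (Fin.val) ⊆
      (Finset.Ico (B * k) (B * k + 2 * k - 1)).erase v.val := by
    intro j hj
    simp only [Finset.mem_image] at hj
    obtain ⟨u, hu, rfl⟩ := hj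
    rw [SimpleGraph.mem_neighborFinset] at hu
    obtain ⟨hne, heq⟩ := hu
    have hm := blk_mem hk hkn u.isLt
    rw [← heq, ← hB] at hm
    simp only [Finset.mem_erase, Finset.mem_Ico]
    refine ⟨fun hvu => hne (Fin.ext hvu.symm), hm.1, by omega⟩
  have hcard : (blockGraph n k).degree v =
      (((blockGraph n k).neighborFinset v).image (Fin.val)).card := by
    rw [Finset.card_image_of_injective _ Fin.val_injective, SimpleGraph.degree]
  have hle := Finset.card_le_card hsub
  rw [← hcard] at hle
  have hvmem : v.val ∈ Finset.Ico (B * k) (B * k + 2 * k - 1) := by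
    have hm := blk_mem hk hkn v.isLt
    rw [← hB] at hm
    simp only [Finset.mem_Ico]
    omega
  have hc : ((Finset.Ico (B * k) (B * k + 2 * k - 1)).erase v.val).card = 2 * k - 2 := by
    rw [Finset.card_erase_of_mem hvmem, Nat.card_Ico]
    omega
  omega

open Classical in
lemma degree_pos {n k : ℕ} (hk : 2 ≤ k) (hkn : k ≤ n) (v : Fin n) :
    0 < (blockGraph n k).degree v := by
  classical
  have hk0 : 0 < k := by omega
  have hq : 1 ≤ n / k := (Nat.one_le_div_iff hk0).2 hkn
  set q := n / k with hqdef
  set B := blk k q v.val with hB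
  have hBq : B ≤ q - 1 := min_le_right _ _
  have hqk : q * k ≤ n := Nat.div_mul_le_self n k
  have hmul : (q - 1) * k + k = q * k := by
    have hx : q - 1 + 1 = q := by omega
    calc (q - 1) * k + k = (q - 1 + 1) * k := by ring
      _ = q * k := by rw [hx]
  have hBk : B * k ≤ (q - 1) * k := Nat.mul_le_mul_right _ hBq
  have hw2 : B * k + 1 < n := by omega
  have hw1 : B * k < n := by omega
  have hb1 : blk k q (B * k) = B := by
    rw [blk, Nat.mul_div_cancel _ hk0, min_eq_left hBq]
  have hb2 : blk k q (B * k + 1) = B := by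
    have : (B * k + 1) / k = B := by
      rw [Nat.mul_comm, Nat.mul_add_div hk0, Nat.div_eq_of_lt (by omega), Nat.add_zero]
    rw [blk, this, min_eq_left hBq]
  rw [SimpleGraph.degree_pos_iff_exists_adj]
  by_cases hv : v.val = B * k
  · refine ⟨⟨B * k + 1, hw2⟩, ?_, ?_⟩
    · intro hcon
      have := congrArg Fin.val hcon
      simp at this
      omega
    · show blk k q v.val = blk k q (B * k + 1)
      rw [hb2, ← hB]
  · refine ⟨⟨B * k, hw1⟩, ?_, ?_⟩
    · intro hcon
      have := congrArg Fin.val hcon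
      simp at this
      exact hv this
    · show blk k q v.val = blk k q (B * k)
      rw [hb1, ← hB]

open Classical in
lemma card_edges_le {n k : ℕ} (hk : 2 ≤ k) (hkn : k ≤ n) :
    (blockGraph n k).edgeFinset.card ≤ n * k := by
  classical
  have hsum := (blockGraph n k).sum_degrees_eq_twice_card_edges
  have hdeg : ∀ v : Fin n, (blockGraph n k).degree v ≤ 2 * k - 2 := by
    intro v
    have := degree_le hk hkn v
    omega
  have hb : ∑ v : Fin n, (blockGraph n k).degree v ≤ n * (2 * k - 2) := by
    calc ∑ v : Fin n, (blockGraph n k).degree v ≤ ∑ _v : Fin n, (2 * k - 2) :=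
          Finset.sum_le_sum fun v _ => hdeg v
      _ = n * (2 * k - 2) := by simp [Finset.sum_const, mul_comm]
  rw [hsum] at hb
  have h2 : n * (2 * k - 2) ≤ 2 * (n * k) := by
    calc n * (2 * k - 2) ≤ n * (2 * k) := Nat.mul_le_mul_left n (by omega)
      _ = 2 * (n * k) := by ring
  omega

open Classical in
lemma rank_le {n k : ℕ} (hk : 2 ≤ k) (hkn : k ≤ n) :
    (augAdj (blockGraph n k)).rank ≤ n / k := by
  classical
  have hk0 : 0 < k := by omega
  have hq : 1 ≤ n / k := (Nat.one_le_div_iff hk0).2 hkn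
  set q := n / k with hqdef
  set A : Matrix (Fin n) (Fin q) (ZMod 2) :=
    fun u i => if (⟨blk k q u.val, blk_lt hq u.val⟩ : Fin q) = i then 1 else 0 with hA
  have hfac : augAdj (blockGraph n k) = A * A.transpose := by
    funext u v
    rw [Matrix.mul_apply]
    have hrw : ∀ i : Fin q, A u i * A.transpose i v =
        if (⟨blk k q u.val, blk_lt hq u.val⟩ : Fin q) = i then
          (if (⟨blk k q v.val, blk_lt hq v.val⟩ : Fin q) = i then (1 : ZMod 2) else 0)
        else 0 := by
      intro i
      simp only [hA, Matrix.transpose_apply, ite_mul, one_mul, zero_mul]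
      rfl
    rw [Finset.sum_congr rfl fun i _ => hrw i, Finset.sum_ite_eq]
    simp only [Finset.mem_univ, if_true]
    show (if u = v ∨ (blockGraph n k).Adj u v then (1 : ZMod 2) else 0) = _
    by_cases hbb : blk k q u.val = blk k q v.val
    · have hfin : (⟨blk k q v.val, blk_lt hq v.val⟩ : Fin q) =
          ⟨blk k q u.val, blk_lt hq u.val⟩ := by
        simp [Fin.ext_iff, hbb]
      rw [hfin, if_pos rfl, if_pos]
      by_cases huv : u = v
      · exact Or.inl huv
      · exact Or.inr ⟨huv, hbb⟩
    · have hfin : ¬((⟨blk k q v.val, blk_lt hq v.val⟩ : Fin q) =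
          ⟨blk k q u.val, blk_lt hq u.val⟩) := by
        simp only [Fin.ext_iff]
        exact fun h => hbb h.symm
      rw [if_neg hfin, if_neg]
      rintro (rfl | ⟨_, h⟩)
      · exact hbb rfl
      · exact hbb h
  rw [hfac]
  calc (A * A.transpose).rank ≤ A.rank := Matrix.rank_mul_le_left A A.transpose
    _ ≤ Fintype.card (Fin q) := Matrix.rank_le_card_width A
    _ = q := Fintype.card_fin q

end StorageAux

open Classical in
/-- If `e n / n → ∞`, then (for all sufficiently large `n`) there are graphs `G n` on
`n` vertices with no isolated vertices and at most `e n` edges such that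
`rank(Ā(G n)) / n → 0`, i.e. `ω(n)` edges suffice for storage codes of rate
`1 - o(1)`. -/
theorem exists_graph_seq_few_edges_rate_tendsto_one (e : ℕ → ℕ)
    (he : Filter.Tendsto (fun n => (e n : ℝ) / n) Filter.atTop Filter.atTop) :
    ∃ (N : ℕ) (G : (n : ℕ) → SimpleGraph (Fin n)),
      (∀ n, N ≤ n →
        (∀ v, 0 < (G n).degree v) ∧ (G n).edgeFinset.card ≤ e n) ∧
      Filter.Tendsto (fun n => ((augAdj (G n)).rank : ℝ) / n)
        Filter.atTop (nhds 0) := by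
  classical
  set kk : ℕ → ℕ := fun n => min (Nat.sqrt (e n / n)) n with hkk
  -- `e n / n → ∞` in ℕ
  have h1 : Filter.Tendsto (fun n => e n / n) Filter.atTop Filter.atTop := by
    rw [Filter.tendsto_atTop]
    intro C
    have hev := (Filter.tendsto_atTop.mp he) (C : ℝ)
    filter_upwards [hev, Filter.eventually_ge_atTop 1] with n hn hn1
    rw [Nat.le_div_iff_mul_le (by omega)]
    have hnpos : (0 : ℝ) < n := by exact_mod_cast hn1
    have hx : (C : ℝ) * n ≤ e n := (le_div_iff₀ hnpos).mp hn
    exact_mod_cast hx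
  have h2 : Filter.Tendsto kk Filter.atTop Filter.atTop := by
    rw [Filter.tendsto_atTop]
    intro C
    have hev := (Filter.tendsto_atTop.mp h1) (C * C)
    filter_upwards [hev, Filter.eventually_ge_atTop C] with n hn hnC
    exact le_min (Nat.le_sqrt.mpr hn) hnC
  obtain ⟨N, hN⟩ := Filter.eventually_atTop.mp ((Filter.tendsto_atTop.mp h2) 2)
  refine ⟨N, fun n => StorageAux.blockGraph n (kk n), ?_, ?_⟩
  · intro n hn
    have hk2 : 2 ≤ kk n := hN n hn
    have hkn : kk n ≤ n := min_le_right _ _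
    refine ⟨fun v => StorageAux.degree_pos hk2 hkn v, ?_⟩
    calc (StorageAux.blockGraph n (kk n)).edgeFinset.card ≤ n * kk n :=
          StorageAux.card_edges_le hk2 hkn
      _ ≤ n * (kk n * kk n) := Nat.mul_le_mul_left n (Nat.le_mul_of_pos_left _ (by omega))
      _ ≤ n * (e n / n) := by
          refine Nat.mul_le_mul_left n ?_
          calc kk n * kk n ≤ Nat.sqrt (e n / n) * Nat.sqrt (e n / n) :=
                Nat.mul_le_mul (min_le_left _ _) (min_le_left _ _)
            _ ≤ e n / n := Nat.sqrt_le _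
      _ ≤ e n := by
          rw [mul_comm]
          exact Nat.div_mul_le_self _ _
  · apply squeeze_zero' (g := fun n => ((kk n : ℝ))⁻¹)
    · filter_upwards with n
      positivity
    · filter_upwards [Filter.eventually_atTop.mpr ⟨N, hN⟩, Filter.eventually_ge_atTop 1]
        with n hk2 hn1
      have hkn : kk n ≤ n := min_le_right _ _
      have hrank : (augAdj (StorageAux.blockGraph n (kk n))).rank ≤ n / kk n :=
        StorageAux.rank_le hk2 hkn
      have hnpos : (0 : ℝ) < n := by exact_mod_cast hn1
      have hkpos : (0 : ℝ) < kk n := by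
        have : (2 : ℕ) ≤ kk n := hk2
        exact_mod_cast (by omega : 0 < kk n)
      have hr1 : ((augAdj (StorageAux.blockGraph n (kk n))).rank : ℝ) ≤ (n : ℝ) / kk n := by
        calc ((augAdj (StorageAux.blockGraph n (kk n))).rank : ℝ) ≤ ((n / kk n : ℕ) : ℝ) := by
              exact_mod_cast hrank
          _ ≤ (n : ℝ) / kk n := Nat.cast_div_le
      calc ((augAdj (StorageAux.blockGraph n (kk n))).rank : ℝ) / n
          ≤ ((n : ℝ) / kk n) / n := by gcongr
        _ = ((kk n : ℝ))⁻¹ := by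
            field_simp
    · exact tendsto_inv_atTop_zero.comp (tendsto_natCast_atTop_atTop.comp h2)
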